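/- Let x_1, …, x_N be vectors that span the Euclidean space ℝ^n, and let y_1, …, y_N be vectors in ℝ^n such that ⟨x_i, y_j⟩ + ⟨x_j, y_i⟩ = 0 for all i, j ∈ {1, …, N}. Then there exists a skew-symmetric linear map Φ : ℝ^n → ℝ^n (i.e. ⟨Φu, v⟩ = −⟨u, Φv⟩ for all u, v ∈ ℝ^n) such that y_i = Φ x_i for all i. -/

import Mathlib

open scoped RealInnerProductSpace

theorem statement0 {n N : ℕ} (x y : Fin N → EuclideanSpace ℝ (Fin n))
    (hspan : Submodule.span ℝ (Set.range x) = ⊤)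
    (h : ∀ i j, ⟪x i, y j⟫ + ⟪x j, y i⟫ = 0) :
    ∃ Φ : EuclideanSpace ℝ (Fin n) →ₗ[ℝ] EuclideanSpace ℝ (Fin n),
      (∀ u v, ⟪Φ u, v⟫ = -⟪u, Φ v⟫) ∧ ∀ i, y i = Φ (x i) := by
  classical
  set S : (Fin N → ℝ) →ₗ[ℝ] EuclideanSpace ℝ (Fin n) :=
    Fintype.linearCombination ℝ x with hSdef
  set T : (Fin N → ℝ) →ₗ[ℝ] EuclideanSpace ℝ (Fin n) :=
    Fintype.linearCombination ℝ y with hTdef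
  have key : ∀ i j, ⟪y i, x j⟫ = -⟪x i, y j⟫ := by
    intro i j
    have := h i j
    linarith [real_inner_comm (y i) (x j)]
  have hTS : ∀ a b : Fin N → ℝ, ⟪T a, S b⟫ = -⟪S a, T b⟫ := by
    intro a b
    simp only [hSdef, hTdef, Fintype.linearCombination_apply, sum_inner, inner_sum,
      real_inner_smul_left, real_inner_smul_right]
    rw [← Finset.sum_neg_distrib]
    refine Finset.sum_congr rfl fun i _ => ?_
    rw [← Finset.sum_neg_distrib]
    refine Finset.sum_congr rfl fun j _ => ?_
    rw [key j i]
    ring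
  have hrange : LinearMap.range S = ⊤ := by
    rw [hSdef, Fintype.range_linearCombination, hspan]
  have hSsurj : Function.Surjective S := LinearMap.range_eq_top.mp hrange
  have hker : ∀ c, S c = 0 → T c = 0 := by
    intro c hc
    have hz : ∀ w, ⟪T c, w⟫ = 0 := by
      intro w
      obtain ⟨b, rfl⟩ := hSsurj w
      rw [hTS, hc]
      simp
    exact inner_self_eq_zero.mp (hz (T c))
  obtain ⟨g, hg⟩ := S.exists_rightInverse_of_surjective hrange
  have hg' : ∀ u, S (g u) = u := fun u => congrFun (congrArg (·.toFun) hg) u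
  refine ⟨T ∘ₗ g, ?_, ?_⟩
  · intro u v
    have hu := hg' u
    have hv := hg' v
    calc ⟪(T ∘ₗ g) u, v⟫ = ⟪T (g u), S (g v)⟫ := by rw [hv]; rfl
    _ = -⟪S (g u), T (g v)⟫ := hTS _ _
    _ = -⟪u, (T ∘ₗ g) v⟫ := by rw [hu]; rfl
  · intro i
    have hx : S (Pi.single i 1) = x i := by
      rw [hSdef, Fintype.linearCombination_apply_single, one_smul]
    have hy : T (Pi.single i 1) = y i := by
      rw [hTdef, Fintype.linearCombination_apply_single, one_smul]
    have hzero : S (g (x i) - Pi.single i 1) = 0 := by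
      rw [map_sub, hg' (x i), hx, sub_self]
    have := hker _ hzero
    rw [map_sub, hy, sub_eq_zero] at this
    exact this.symm
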